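/- Let G be the directed acyclic graph with vertex set {A, B, C} and edges A→B and A→C, with all state spaces equal to {0,1}, and let a ≠ a' be two values of A. Then there exist two causal structures in the single world model (SWM) for G having identical observed joint distributions of (A, B, C) but different joint distributions of the responses (B(𝔞), C(𝔞)) to the edge intervention 𝔞 setting (A→B) to a and (A→C) to a'; similarly there exist such pairs for the edge intervention setting only (A→B) to a, and for the edge intervention setting only (A→C) to a. Consequently, none of these three response distributions is identified from p(A,B,C) under the SWM for G. -/

import Mathlib

open scoped Classical
open MeasureTheory

namespace CausalHierarchy

variable {V : Type}

/-- A directed path in a directed graph with edge relation `edge`: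
a nonempty list of vertices in which each consecutive pair is joined by an edge. -/
structure DiPath (edge : V → V → Prop) : Type where
  verts : List V
  ne : verts ≠ []
  chain : verts.Chain' edge

namespace DiPath

variable {edge : V → V → Prop}

/-- The source (first vertex) of a directed path. -/
def src (p : DiPath edge) : V := p.verts.head p.ne

/-- The sink (last vertex) of a directed path. -/
def sink (p : DiPath edge) : V := p.verts.getLast p.ne

/-- The second vertex of a directed path (junk value for single-vertex paths). -/
def snd2 (p : DiPath edge) : V := p.verts.tail.headD p.src

/-- The first edge of a directed path, as an ordered pair of vertices. -/
def firstEdge (p : DiPath edge) : V × V := (p.src, p.snd2)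

/-- `q` is a (contiguous) subpath of `p`. -/
def Subpath (q p : DiPath edge) : Prop := ∃ l r, p.verts = l ++ q.verts ++ r

/-- `q` is a prefix subpath of `p`. -/
def IsPrefix (q p : DiPath edge) : Prop := q.verts <+: p.verts

/-- `q` is a suffix subpath of `p`. -/
def IsSuffix (q p : DiPath edge) : Prop := q.verts <:+ p.verts

end DiPath

/-- A directed graph is acyclic if its transitive closure is irreflexive. -/
def Acyclic (edge : V → V → Prop) : Prop := Irreflexive (Relation.TransGen edge)

theorem Acyclic.wf [Finite V] {edge : V → V → Prop} (h : Acyclic edge) :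
    WellFounded (Relation.TransGen edge) := by
  have h1 : IsIrrefl V (Relation.TransGen edge) := ⟨h⟩
  have h2 : IsTrans V (Relation.TransGen edge) := ⟨fun _ _ _ => Relation.TransGen.trans⟩
  exact Finite.wellFounded_of_trans_of_irrefl _

/-- A set of directed paths is proper if no path in it is a prefix subpath of another. -/
def Proper {edge : V → V → Prop} (A : Set (DiPath edge)) : Prop :=
  ∀ p ∈ A, ∀ q ∈ A, p.IsPrefix q → p = q

/-- `rel edge Y A`: the directed paths relevant for `Y` given `A`: paths with sink in `Y`
such that no member of `A` is a subpath, except possibly a prefix subpath. -/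
def rel (edge : V → V → Prop) (Y : Set V) (A : Set (DiPath edge)) : Set (DiPath edge) :=
  {α | α.sink ∈ Y ∧ ∀ β ∈ A, β.Subpath α → β.IsPrefix α}

/-- A path `α` is live for `Y` given `A` if some relevant path has it as a prefix. -/
def Live (edge : V → V → Prop) (Y : Set V) (A : Set (DiPath edge)) (α : DiPath edge) : Prop :=
  ∃ p ∈ rel edge Y A, α.IsPrefix p

/-- The set of members of `A` live for `Y` given `A`. -/
def liveSub (edge : V → V → Prop) (Y : Set V) (A : Set (DiPath edge)) : Set (DiPath edge) :=
  {α ∈ A | Live edge Y A α}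

/-- `A` is live for `Y` if every member of `A` is live for `Y` given `A`. -/
def LiveSet (edge : V → V → Prop) (Y : Set V) (A : Set (DiPath edge)) : Prop :=
  ∀ α ∈ A, Live edge Y A α

/-- The funnel operator for the edge `(w,y)`: paths of the form `(a,…,w,y)` are truncated
to `(a,…,w)`, paths containing `w` not ending with the edge `(w,y)` are removed, and other
paths are kept unchanged. -/
def funnel {edge : V → V → Prop} (w y : V) (A : Set (DiPath edge)) : Set (DiPath edge) :=
  {q | (q ∈ A ∧ w ∉ q.verts) ∨ (q.sink = w ∧ ∃ p ∈ A, p.verts = q.verts ++ [y])}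

/-- `alphaSet edge A Y`: all directed paths (with at least one edge) with source in `A`,
sink in `A ∪ Y`, and not intersecting `A ∪ Y` except at the source and sink. -/
def alphaSet (edge : V → V → Prop) (A Y : Set V) : Set (DiPath edge) :=
  {p | 2 ≤ p.verts.length ∧ p.src ∈ A ∧ p.sink ∈ A ∪ Y ∧
       ∀ l₁ v l₂, p.verts = l₁ ++ v :: l₂ → v ∈ A ∪ Y → l₁ = [] ∨ l₂ = []}

/-- The set of first edges of the (nontrivial) paths in `A`. -/
def firstEdges {edge : V → V → Prop} (A : Set (DiPath edge)) : Set (V × V) :=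
  {e | ∃ p ∈ A, 2 ≤ p.verts.length ∧ e = p.firstEdge}

/-- A causal structure for the graph `(V, edge)` with state spaces `X`: a probability space
together with, for each vertex `v` and assignment of values to its parents, a random
variable (the one-step-ahead potential outcome).  The function `f v` takes a full tuple of
values but depends only on the coordinates of parents of `v`. -/
structure CausalStructure (V : Type) (edge : V → V → Prop) (X : V → Type) : Type 1 where
  Ω : Type
  m : MeasurableSpace Ω
  μ : @MeasureTheory.Measure Ω m
  prob : μ Set.univ = 1
  f : (v : V) → ((w : V) → X w) → Ω → X v
  localDep : ∀ v x y, (∀ w, edge w v → x w = y w) → f v x = f v y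

variable {X : V → Type}

/-- The natural (observed) variable of each vertex, obtained by recursive substitution with
no intervention. -/
noncomputable def observed [Finite V] {edge : V → V → Prop} [∀ v, Nonempty (X v)]
    (hG : Acyclic edge) (C : CausalStructure V edge X) (v : V) : C.Ω → X v :=
  hG.wf.fix (C := fun u => C.Ω → X u)
    (fun v IH ω => C.f v (fun w =>
      if h : Relation.TransGen edge w v then IH w h ω else Classical.arbitrary (X w)) ω) v

/-- The response to the node intervention setting the vertices of `A` to the values `a`,
defined by recursive substitution. -/
noncomputable def nodeResp [Finite V] {edge : V → V → Prop} [∀ v, Nonempty (X v)]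
    (hG : Acyclic edge) (C : CausalStructure V edge X)
    (A : Set V) (a : ∀ u, X u) (v : V) : C.Ω → X v :=
  hG.wf.fix (C := fun u => C.Ω → X u)
    (fun v IH ω => C.f v (fun w =>
      if w ∈ A then a w
      else if h : Relation.TransGen edge w v then IH w h ω
      else Classical.arbitrary (X w)) ω) v

/-- The response to the edge intervention assigning, to each edge `e ∈ E`, the value
`aE e e.1` (a value in the state space of the source of `e`), defined by recursive
substitution. -/
noncomputable def edgeResp [Finite V] {edge : V → V → Prop} [∀ v, Nonempty (X v)]
    (hG : Acyclic edge) (C : CausalStructure V edge X)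
    (E : Set (V × V)) (aE : V × V → ∀ u, X u) (v : V) : C.Ω → X v :=
  hG.wf.fix (C := fun u => C.Ω → X u)
    (fun v IH ω => C.f v (fun w =>
      if (w, v) ∈ E then aE (w, v) w
      else if h : Relation.TransGen edge w v then IH w h ω
      else Classical.arbitrary (X w)) ω) v

/-- The funneled path assignment: the truncation of a path of `A` by the funnel operator for
`(w,y)` receives the value assigned to the original path; other paths keep their values. -/
noncomputable def funnelAssign {edge : V → V → Prop} (w y : V) (A : Set (DiPath edge))
    (a : DiPath edge → ∀ u, X u) (q : DiPath edge) : ∀ u, X u :=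
  if h : q.sink = w ∧ ∃ p ∈ A, p.verts = q.verts ++ [y] then a h.2.choose else a q

/-- The response to the path intervention assigning, to each directed path `p ∈ A`, the
value `a p p.src` (a value in the state space of the source of `p`), defined by recursive
substitution via the funnel operator. -/
noncomputable def pathResp [Finite V] {edge : V → V → Prop} [∀ v, Nonempty (X v)]
    (hG : Acyclic edge) (C : CausalStructure V edge X)
    (A : Set (DiPath edge)) (a : DiPath edge → ∀ u, X u) (v : V) : C.Ω → X v :=
  hG.wf.fix (C := fun u => Set (DiPath edge) → (DiPath edge → ∀ z, X z) → C.Ω → X u)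
    (fun v IH A a ω => C.f v (fun w =>
      if h : ∃ p ∈ A, p.verts = [w, v] then a h.choose w
      else if hw : Relation.TransGen edge w v then
        IH w hw (funnel w v A) (funnelAssign w v A a) ω
      else Classical.arbitrary (X w)) ω) v A a

/-- The response to the path intervention in which the paths of `Astar ⊆ A` are assigned
the constant values `a`, and the paths of `A ∖ Astar` are assigned the natural values of
their sources, defined by recursive substitution via the funnel operator. -/
noncomputable def pathRespNat [Finite V] {edge : V → V → Prop} [∀ v, Nonempty (X v)]
    (hG : Acyclic edge) (C : CausalStructure V edge X)
    (A Astar : Set (DiPath edge)) (a : DiPath edge → ∀ u, X u) (v : V) : C.Ω → X v :=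
  hG.wf.fix (C := fun u =>
      Set (DiPath edge) → Set (DiPath edge) → (DiPath edge → ∀ z, X z) → C.Ω → X u)
    (fun v IH A Astar a ω => C.f v (fun w =>
      if h : ∃ p ∈ A, p.verts = [w, v] then
        (if h.choose ∈ Astar then a h.choose w else observed hG C w ω)
      else if hw : Relation.TransGen edge w v then
        IH w hw (funnel w v A) (funnel w v Astar) (funnelAssign w v A a) ω
      else Classical.arbitrary (X w)) ω) v A Astar a

/-- The observed distribution `p(𝐕)`, as a probability mass function. -/
noncomputable def obsDist [Finite V] {edge : V → V → Prop} [∀ v, Nonempty (X v)]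
    (hG : Acyclic edge) (C : CausalStructure V edge X) : (∀ v, X v) → ENNReal :=
  fun s => C.μ {ω | ∀ v, observed hG C v ω = s v}

/-- The single world model (Robins' FFRCISTG model): for every joint value assignment `x`,
the one-step-ahead variables `{V(x_{pa(V)}) : V ∈ 𝐕}` are mutually independent. -/
def SWM {edge : V → V → Prop} (C : CausalStructure V edge X) : Prop :=
  ∀ x : ∀ u, X u, ∀ (S : Finset V) (s : ∀ u, X u),
    C.μ {ω | ∀ v ∈ S, C.f v x ω = s v} = ∏ v ∈ S, C.μ {ω | C.f v x ω = s v}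

/-- The multiple worlds model (Pearl's NPSEM-IE): the families
`{V(x) : x an assignment to pa(V)}`, one family per vertex, are mutually independent. -/
def MWM {edge : V → V → Prop} (C : CausalStructure V edge X) : Prop :=
  ∀ (S : Finset V) (g : ∀ v, ((∀ u, X u) → X v)),
    C.μ {ω | ∀ v ∈ S, (fun x => C.f v x ω) = g v} =
      ∏ v ∈ S, C.μ {ω | (fun x => C.f v x ω) = g v}

/-- The conditional probability `p(val | values c of the parents of v)` of the observed
distribution. -/
noncomputable def condProb [Finite V] {edge : V → V → Prop} [∀ v, Nonempty (X v)]
    (hG : Acyclic edge) (C : CausalStructure V edge X)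
    (v : V) (val : X v) (c : ∀ u, X u) : ENNReal :=
  C.μ {ω | observed hG C v ω = val ∧ ∀ w, edge w v → observed hG C w ω = c w} /
    C.μ {ω | ∀ w, edge w v → observed hG C w ω = c w}

/-- A response distribution `R` is identified from `p(𝐕)` under the model `M` if any two
causal structures in `M` with the same observed distribution give it the same value. -/
def Identified [Finite V] {edge : V → V → Prop} [∀ v, Nonempty (X v)] (hG : Acyclic edge)
    (M : CausalStructure V edge X → Prop)
    (R : CausalStructure V edge X → (∀ v, X v) → ENNReal) : Prop :=
  ∀ C₁ C₂, M C₁ → M C₂ → obsDist hG C₁ = obsDist hG C₂ → R C₁ = R C₂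

/-- Paths relevant for `Y` given a set of edges `E`: sink in `Y` and no edge of `E` occurs
in the path except possibly as the first edge. -/
def relE (edge : V → V → Prop) (Y : Set V) (E : Set (V × V)) : Set (DiPath edge) :=
  {p | p.sink ∈ Y ∧ ∀ l₁ w v l₂, p.verts = l₁ ++ w :: v :: l₂ → (w, v) ∈ E → l₁ = []}

/-- A set of edges is live for `Y` if each of its edges begins some relevant path. -/
def LiveE (edge : V → V → Prop) (Y : Set V) (E : Set (V × V)) : Prop :=
  ∀ e ∈ E, ∃ p ∈ relE edge Y E, ∃ l, p.verts = e.1 :: e.2 :: l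

/-- A set of edges live for `Y` is consistent for `Y` if for every vertex `a`, the set of
first edges of relevant paths with source `a` is contained in `E` or disjoint from `E`. -/
def ConsistentE (edge : V → V → Prop) (Y : Set V) (E : Set (V × V)) : Prop :=
  ∀ a : V, (∀ p ∈ relE edge Y E, ∀ b l, p.verts = a :: b :: l → (a, b) ∈ E) ∨
           (∀ p ∈ relE edge Y E, ∀ b l, p.verts = a :: b :: l → (a, b) ∉ E)

/-- An edge intervention is node consistent for `Y` if its edge set is live and consistent
for `Y` and all edges sharing a source are assigned the same value. -/
def NodeConsistent {X : V → Type} (edge : V → V → Prop) (Y : Set V) (E : Set (V × V))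
    (aE : V × V → ∀ u, X u) : Prop :=
  LiveE edge Y E ∧ ConsistentE edge Y E ∧
    ∀ e ∈ E, ∀ e' ∈ E, e.1 = e'.1 → aE e e.1 = aE e' e.1

/-- A proper set of paths live for `Y` is consistent for `Y` if whenever the first edge of
some path of `A` occurs in a relevant path `β`, it is the first edge of a prefix subpath of
`β` belonging to `A`. -/
def ConsistentP (edge : V → V → Prop) (Y : Set V) (A : Set (DiPath edge)) : Prop :=
  ∀ a b : V, (∃ p ∈ A, ∃ l, p.verts = a :: b :: l) →
    ∀ β ∈ rel edge Y A, (∃ l₁ l₂, β.verts = l₁ ++ a :: b :: l₂) →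
      ∃ q ∈ A, q.IsPrefix β ∧ ∃ l', q.verts = a :: b :: l'

/-- A path intervention is edge consistent for `Y` if its path set is live and consistent
for `Y` and all paths sharing the same first edge are assigned the same value. -/
def EdgeConsistentP {X : V → Type} (edge : V → V → Prop) (Y : Set V)
    (A : Set (DiPath edge)) (a : DiPath edge → ∀ u, X u) : Prop :=
  LiveSet edge Y A ∧ ConsistentP edge Y A ∧
    ∀ p ∈ A, ∀ q ∈ A, p.firstEdge = q.firstEdge → a p p.src = a q p.src

/-- A directed path of a graph is a directed path of any supergraph. -/
def liftPath {edge edge' : V → V → Prop} (h : ∀ a b, edge a b → edge' a b)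
    (p : DiPath edge) : DiPath edge' :=
  ⟨p.verts, p.ne, p.chain.imp (fun {a b} hab => h a b hab)⟩


/-- The graph with vertices `A = 0`, `B = 1`, `C = 2` and edges `A → B`, `A → C`. -/
def edge03 : Fin 3 → Fin 3 → Prop := fun i j => i = 0 ∧ (j = 1 ∨ j = 2)

theorem edge03_acyclic : Acyclic edge03 := by
  intro x hx
  have h0 : ∀ y, Relation.TransGen edge03 x y → x = 0 := by
    intro y hy
    induction hy with
    | single h => exact h.1
    | tail _ _ ih => exact ih
  have h1 : x = 1 ∨ x = 2 := by
    cases hx with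
    | single h => exact h.2
    | tail _ h => exact h.2
  rw [h0 x hx] at h1
  rcases h1 with h1 | h1 <;> exact absurd h1 (by decide)

/-- The joint distribution of the responses `(B, C)` to an edge intervention on the graph
`A → B`, `A → C`, all state spaces `{0,1}`. -/
noncomputable def respDist10 (E : Set (Fin 3 × Fin 3))
    (aE : Fin 3 × Fin 3 → ∀ _ : Fin 3, Fin 2)
    (C : CausalStructure (Fin 3) edge03 (fun _ => Fin 2)) :
    (∀ _ : Fin 3, Fin 2) → ENNReal :=
  fun s => C.μ {ω | ∀ y ∈ ({1, 2} : Set (Fin 3)), edgeResp edge03_acyclic C E aE y ω = s y}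

/-- Two causal structures in the SWM with identical observed distributions but different
joint response distributions for the given edge intervention. -/
def NonIdWitness10 (E : Set (Fin 3 × Fin 3))
    (aE : Fin 3 × Fin 3 → ∀ _ : Fin 3, Fin 2) : Prop :=
  ∃ C₁ C₂ : CausalStructure (Fin 3) edge03 (fun _ => Fin 2),
    SWM C₁ ∧ SWM C₂ ∧ obsDist edge03_acyclic C₁ = obsDist edge03_acyclic C₂ ∧
    respDist10 E aE C₁ ≠ respDist10 E aE C₂


/-! ### Auxiliary constructions for the non-identification theorem -/

/-- The sample space: four independent fair bits `(A, U, U', W)`. -/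
abbrev Om4 : Type := Fin 2 × Fin 2 × Fin 2 × Fin 2

/-- The uniform measure on `Om4`. -/
noncomputable def mu4 : Measure Om4 := (16 : ENNReal)⁻¹ • Measure.count

theorem mu4_eval (p : Om4 → Prop) [DecidablePred p] :
    mu4 {ω | p ω} = (16 : ENNReal)⁻¹ * (Finset.univ.filter p).card := by
  rw [mu4, Measure.smul_apply, Measure.count_apply_finite _ (Set.toFinite _)]
  norm_cast
  rw [smul_eq_mul]
  congr 2
  rw [Set.Finite.card_toFinset]
  simp [Set.toFinset_card]

theorem mu4_univ : mu4 Set.univ = 1 := by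
  rw [mu4, Measure.smul_apply, Measure.count_univ]
  rw [ENat.card_eq_coe_fintype_card, show Fintype.card Om4 = 16 from rfl, smul_eq_mul]
  norm_num
  exact ENNReal.inv_mul_cancel (by norm_num) (by norm_num)

/-- The response function of vertex `v` given value `b` of `A` and noise `ω`. -/
def gf (fB fC : Fin 2 → Om4 → Fin 2) (v : Fin 3) (b : Fin 2) (ω : Om4) : Fin 2 :=
  if v = 0 then ω.1 else if v = 1 then fB b ω else fC b ω

/-- A causal structure on the graph `A → B`, `A → C` built from response functions
`fB`, `fC` for `B` and `C` depending only on the value of `A` and the noise. -/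
noncomputable def mkCS (fB fC : Fin 2 → Om4 → Fin 2) :
    CausalStructure (Fin 3) edge03 (fun _ => Fin 2) where
  Ω := Om4
  m := inferInstance
  μ := mu4
  prob := mu4_univ
  f := fun v x ω => gf fB fC v (x 0) ω
  localDep := by
    intro v x y h
    fin_cases v
    · simp [gf]
    · have h0 := h 0 ⟨rfl, Or.inl rfl⟩
      simp [gf, h0]
    · have h0 := h 0 ⟨rfl, Or.inr rfl⟩
      simp [gf, h0]

theorem tg01 : Relation.TransGen edge03 0 1 := Relation.TransGen.single ⟨rfl, Or.inl rfl⟩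
theorem tg02 : Relation.TransGen edge03 0 2 := Relation.TransGen.single ⟨rfl, Or.inr rfl⟩

theorem observed_fix {edge : Fin 3 → Fin 3 → Prop}
    (hG : Acyclic edge) (C : CausalStructure (Fin 3) edge (fun _ => Fin 2)) (v : Fin 3) :
    observed hG C v = fun ω => C.f v (fun w =>
      if h : Relation.TransGen edge w v then observed hG C w ω
      else Classical.arbitrary (Fin 2)) ω := by
  conv_lhs => rw [observed, WellFounded.fix_eq]
  rfl

theorem edgeResp_fix {edge : Fin 3 → Fin 3 → Prop}
    (hG : Acyclic edge) (C : CausalStructure (Fin 3) edge (fun _ => Fin 2))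
    (E : Set (Fin 3 × Fin 3)) (aE : Fin 3 × Fin 3 → ∀ _ : Fin 3, Fin 2) (v : Fin 3) :
    edgeResp hG C E aE v = fun ω => C.f v (fun w =>
      if (w, v) ∈ E then aE (w, v) w
      else if h : Relation.TransGen edge w v then edgeResp hG C E aE w ω
      else Classical.arbitrary (Fin 2)) ω := by
  conv_lhs => rw [edgeResp, WellFounded.fix_eq]
  rfl

theorem mkCS_f0 (fB fC : Fin 2 → Om4 → Fin 2) (x : ∀ _ : Fin 3, Fin 2) (ω : Om4) :
    (mkCS fB fC).f 0 x ω = ω.1 := rfl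

theorem mkCS_f1 (fB fC : Fin 2 → Om4 → Fin 2) (x : ∀ _ : Fin 3, Fin 2) (ω : Om4) :
    (mkCS fB fC).f 1 x ω = fB (x 0) ω := rfl

theorem mkCS_f2 (fB fC : Fin 2 → Om4 → Fin 2) (x : ∀ _ : Fin 3, Fin 2) (ω : Om4) :
    (mkCS fB fC).f 2 x ω = fC (x 0) ω := rfl

theorem observed_mk0 (fB fC : Fin 2 → Om4 → Fin 2) (ω : Om4) :
    observed edge03_acyclic (mkCS fB fC) 0 ω = ω.1 := by
  rw [observed_fix]; rfl

theorem observed_mk1 (fB fC : Fin 2 → Om4 → Fin 2) (ω : Om4) :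
    observed edge03_acyclic (mkCS fB fC) 1 ω = fB ω.1 ω := by
  rw [observed_fix]
  show (mkCS fB fC).f 1 _ ω = _
  rw [mkCS_f1, dif_pos tg01, observed_mk0]

theorem observed_mk2 (fB fC : Fin 2 → Om4 → Fin 2) (ω : Om4) :
    observed edge03_acyclic (mkCS fB fC) 2 ω = fC ω.1 ω := by
  rw [observed_fix]
  show (mkCS fB fC).f 2 _ ω = _
  rw [mkCS_f2, dif_pos tg02, observed_mk0]

theorem edgeResp_mk0 (fB fC : Fin 2 → Om4 → Fin 2) (E : Set (Fin 3 × Fin 3))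
    (aE : Fin 3 × Fin 3 → ∀ _ : Fin 3, Fin 2) (ω : Om4) :
    edgeResp edge03_acyclic (mkCS fB fC) E aE 0 ω = ω.1 := by
  rw [edgeResp_fix]; rfl

theorem edgeResp_mk1_mem (fB fC : Fin 2 → Om4 → Fin 2) (E : Set (Fin 3 × Fin 3))
    (aE : Fin 3 × Fin 3 → ∀ _ : Fin 3, Fin 2) (ω : Om4) (h : ((0 : Fin 3), (1 : Fin 3)) ∈ E) :
    edgeResp edge03_acyclic (mkCS fB fC) E aE 1 ω = fB (aE (0, 1) 0) ω := by
  rw [edgeResp_fix]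
  show (mkCS fB fC).f 1 _ ω = _
  rw [mkCS_f1, if_pos h]

theorem edgeResp_mk1_notMem (fB fC : Fin 2 → Om4 → Fin 2) (E : Set (Fin 3 × Fin 3))
    (aE : Fin 3 × Fin 3 → ∀ _ : Fin 3, Fin 2) (ω : Om4) (h : ((0 : Fin 3), (1 : Fin 3)) ∉ E) :
    edgeResp edge03_acyclic (mkCS fB fC) E aE 1 ω = fB ω.1 ω := by
  rw [edgeResp_fix]
  show (mkCS fB fC).f 1 _ ω = _
  rw [mkCS_f1, if_neg h, dif_pos tg01, edgeResp_mk0]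

theorem edgeResp_mk2_mem (fB fC : Fin 2 → Om4 → Fin 2) (E : Set (Fin 3 × Fin 3))
    (aE : Fin 3 × Fin 3 → ∀ _ : Fin 3, Fin 2) (ω : Om4) (h : ((0 : Fin 3), (2 : Fin 3)) ∈ E) :
    edgeResp edge03_acyclic (mkCS fB fC) E aE 2 ω = fC (aE (0, 2) 0) ω := by
  rw [edgeResp_fix]
  show (mkCS fB fC).f 2 _ ω = _
  rw [mkCS_f2, if_pos h]

theorem edgeResp_mk2_notMem (fB fC : Fin 2 → Om4 → Fin 2) (E : Set (Fin 3 × Fin 3))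
    (aE : Fin 3 × Fin 3 → ∀ _ : Fin 3, Fin 2) (ω : Om4) (h : ((0 : Fin 3), (2 : Fin 3)) ∉ E) :
    edgeResp edge03_acyclic (mkCS fB fC) E aE 2 ω = fC ω.1 ω := by
  rw [edgeResp_fix]
  show (mkCS fB fC).f 2 _ ω = _
  rw [mkCS_f2, if_neg h, dif_pos tg02, edgeResp_mk0]


theorem ennreal_cancel {a b c : ENNReal} (h0 : a ≠ 0) (ht : a ≠ ⊤) (h : a * b = a * c) :
    b = c := by
  have := congrArg (a⁻¹ * ·) h
  simpa [← mul_assoc, ENNReal.inv_mul_cancel h0 ht] using this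

theorem SWM_mk (fB fC : Fin 2 → Om4 → Fin 2)
    (H : ∀ (b : Fin 2) (S : Finset (Fin 3)) (s : Fin 3 → Fin 2),
      16 ^ S.card *
          (Finset.univ.filter (fun ω : Om4 => ∀ v ∈ S, gf fB fC v b ω = s v)).card =
        16 * ∏ v ∈ S, (Finset.univ.filter (fun ω : Om4 => gf fB fC v b ω = s v)).card) :
    SWM (mkCS fB fC) := by
  intro x S s
  show mu4 {ω : Om4 | ∀ v ∈ S, gf fB fC v (x 0) ω = s v} =
    ∏ v ∈ S, mu4 {ω : Om4 | gf fB fC v (x 0) ω = s v}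
  rw [mu4_eval]
  rw [Finset.prod_congr rfl (fun v _ => mu4_eval (fun ω : Om4 => gf fB fC v (x 0) ω = s v))]
  rw [Finset.prod_mul_distrib, Finset.prod_const]
  set k := S.card
  set N := (Finset.univ.filter (fun ω : Om4 => ∀ v ∈ S, gf fB fC v (x 0) ω = s v)).card
  set P := ∏ v ∈ S, (Finset.univ.filter (fun ω : Om4 => gf fB fC v (x 0) ω = s v)).card
  have key : (16 : ENNReal) ^ k * N = 16 * P := by
    have := H (x 0) S s
    push_cast [← this]
    norm_cast
  have h1 : (16 : ENNReal) ≠ 0 := by norm_num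
  have h2 : (16 : ENNReal) ≠ ⊤ := by norm_num
  have hP : ((P : ℕ) : ENNReal) = Finset.prod S fun v =>
      ((Finset.univ.filter (fun ω : Om4 => gf fB fC v (x 0) ω = s v)).card : ENNReal) := by
    push_cast [P]
    rfl
  rw [← hP]
  apply ennreal_cancel (a := (16 : ENNReal) ^ (k + 1))
      (pow_ne_zero _ h1) (ENNReal.pow_ne_top h2)
  calc (16 : ENNReal) ^ (k + 1) * (16⁻¹ * N)
      = (16 * 16⁻¹) * (16 ^ k * N) := by rw [pow_succ]; ring
    _ = 16 ^ k * N := by rw [ENNReal.mul_inv_cancel h1 h2, one_mul]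
    _ = 16 * P := key
    _ = (16 * 16⁻¹) ^ k * (16 * P) := by
        rw [ENNReal.mul_inv_cancel h1 h2, one_pow, one_mul]
    _ = (16 : ENNReal) ^ (k + 1) * (16⁻¹ ^ k * P) := by rw [mul_pow, pow_succ]; ring

theorem obsDist_mk (fB fC : Fin 2 → Om4 → Fin 2) (s : ∀ _ : Fin 3, Fin 2) :
    obsDist edge03_acyclic (mkCS fB fC) s =
      (16 : ENNReal)⁻¹ *
        (Finset.univ.filter
          (fun ω : Om4 => ω.1 = s 0 ∧ fB ω.1 ω = s 1 ∧ fC ω.1 ω = s 2)).card := by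
  show mu4 _ = _
  have hset : {ω : Om4 | ∀ v, observed edge03_acyclic (mkCS fB fC) v ω = s v} =
      {ω : Om4 | ω.1 = s 0 ∧ fB ω.1 ω = s 1 ∧ fC ω.1 ω = s 2} := by
    ext ω
    constructor
    · intro h
      refine ⟨?_, ?_, ?_⟩
      · rw [← observed_mk0 fB fC ω]; exact h 0
      · rw [← observed_mk1 fB fC ω]; exact h 1
      · rw [← observed_mk2 fB fC ω]; exact h 2
    · rintro ⟨h0, h1, h2⟩ v
      rcases show v = 0 ∨ v = 1 ∨ v = 2 by revert v; decide with rfl | rfl | rfl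
      · rw [observed_mk0]; exact h0
      · rw [observed_mk1]; exact h1
      · rw [observed_mk2]; exact h2
  show mu4 {ω : Om4 | ∀ v, observed edge03_acyclic (mkCS fB fC) v ω = s v} = _
  rw [hset, mu4_eval]

theorem respDist_mk (fB fC : Fin 2 → Om4 → Fin 2) (E : Set (Fin 3 × Fin 3))
    (aE : Fin 3 × Fin 3 → ∀ _ : Fin 3, Fin 2) (r1 r2 : Om4 → Fin 2)
    (h1 : ∀ ω, edgeResp edge03_acyclic (mkCS fB fC) E aE 1 ω = r1 ω)
    (h2 : ∀ ω, edgeResp edge03_acyclic (mkCS fB fC) E aE 2 ω = r2 ω)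
    (s : ∀ _ : Fin 3, Fin 2) :
    respDist10 E aE (mkCS fB fC) s =
      (16 : ENNReal)⁻¹ *
        (Finset.univ.filter (fun ω : Om4 => r1 ω = s 1 ∧ r2 ω = s 2)).card := by
  show mu4 {ω : Om4 | ∀ y ∈ ({1, 2} : Set (Fin 3)),
      edgeResp edge03_acyclic (mkCS fB fC) E aE y ω = s y} = _
  have hset : {ω : Om4 | ∀ y ∈ ({1, 2} : Set (Fin 3)),
        edgeResp edge03_acyclic (mkCS fB fC) E aE y ω = s y} =
      {ω : Om4 | r1 ω = s 1 ∧ r2 ω = s 2} := by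
    ext ω
    constructor
    · intro h
      exact ⟨by exact (h1 ω).symm.trans (h 1 (Set.mem_insert _ _)),
             by exact (h2 ω).symm.trans (h 2 (Set.mem_insert_of_mem _ rfl))⟩
    · rintro ⟨q1, q2⟩ y hy
      rcases hy with hy | hy
      · subst hy; exact (h1 ω).trans q1
      · rw [Set.mem_singleton_iff] at hy
        subst hy; exact (h2 ω).trans q2
  rw [hset, mu4_eval]

theorem neq_of_card_ne {m n : ℕ} (h : m ≠ n) :
    (16 : ENNReal)⁻¹ * m ≠ (16 : ENNReal)⁻¹ * n := by
  intro heq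
  have h0 : (16 : ENNReal)⁻¹ ≠ 0 := by norm_num
  have ht : (16 : ENNReal)⁻¹ ≠ ⊤ := by norm_num
  have := ennreal_cancel h0 ht heq
  exact h (by exact_mod_cast this)

/-- Response functions of the first causal structure. -/
def fB1 : Fin 2 → Om4 → Fin 2 := fun b ω => b + ω.2.1
def fC1 : Fin 2 → Om4 → Fin 2 := fun b ω => b + ω.2.2.2

/-- Response functions of the second causal structure (for the first two interventions). -/
def fB2 (a : Fin 2) : Fin 2 → Om4 → Fin 2 := fun b ω => if b = a then ω.2.1 else ω.2.2.1
def fC2 (a' : Fin 2) : Fin 2 → Om4 → Fin 2 := fun b ω => if b = a' then ω.2.1 else ω.2.2.2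

/-- Response function of `C` in the third causal structure (for the third intervention). -/
def fC3 (a : Fin 2) : Fin 2 → Om4 → Fin 2 := fun b ω => if b = a then ω.2.2.1 else ω.2.2.2


set_option maxRecDepth 8000 in
theorem H1 : ∀ (b : Fin 2) (S : Finset (Fin 3)) (s : Fin 3 → Fin 2),
    16 ^ S.card *
        (Finset.univ.filter (fun ω : Om4 => ∀ v ∈ S, gf fB1 fC1 v b ω = s v)).card =
      16 * ∏ v ∈ S, (Finset.univ.filter (fun ω : Om4 => gf fB1 fC1 v b ω = s v)).card := by
  decide

set_option maxRecDepth 8000 in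
theorem H2 : ∀ (a a' : Fin 2), a ≠ a' → ∀ (b : Fin 2) (S : Finset (Fin 3)) (s : Fin 3 → Fin 2),
    16 ^ S.card *
        (Finset.univ.filter
          (fun ω : Om4 => ∀ v ∈ S, gf (fB2 a) (fC2 a') v b ω = s v)).card =
      16 * ∏ v ∈ S,
        (Finset.univ.filter (fun ω : Om4 => gf (fB2 a) (fC2 a') v b ω = s v)).card := by
  decide

set_option maxRecDepth 8000 in
theorem H3 : ∀ (a : Fin 2) (b : Fin 2) (S : Finset (Fin 3)) (s : Fin 3 → Fin 2),
    16 ^ S.card *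
        (Finset.univ.filter
          (fun ω : Om4 => ∀ v ∈ S, gf (fB2 a) (fC3 a) v b ω = s v)).card =
      16 * ∏ v ∈ S,
        (Finset.univ.filter (fun ω : Om4 => gf (fB2 a) (fC3 a) v b ω = s v)).card := by
  decide

theorem Hobs12 : ∀ (a a' : Fin 2), a ≠ a' → ∀ s : Fin 3 → Fin 2,
    (Finset.univ.filter
      (fun ω : Om4 => ω.1 = s 0 ∧ fB1 ω.1 ω = s 1 ∧ fC1 ω.1 ω = s 2)).card =
    (Finset.univ.filter
      (fun ω : Om4 => ω.1 = s 0 ∧ fB2 a ω.1 ω = s 1 ∧ fC2 a' ω.1 ω = s 2)).card := by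
  decide

theorem Hobs13 : ∀ (a a' : Fin 2), a ≠ a' → ∀ s : Fin 3 → Fin 2,
    (Finset.univ.filter
      (fun ω : Om4 => ω.1 = s 0 ∧ fB1 ω.1 ω = s 1 ∧ fC1 ω.1 ω = s 2)).card =
    (Finset.univ.filter
      (fun ω : Om4 => ω.1 = s 0 ∧ fB2 a ω.1 ω = s 1 ∧ fC3 a ω.1 ω = s 2)).card := by
  decide

theorem Hne1 : ∀ (a a' : Fin 2), a ≠ a' →
    (Finset.univ.filter (fun ω : Om4 => fB1 a ω = 0 ∧ fC1 a' ω = 0)).card ≠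
    (Finset.univ.filter (fun ω : Om4 => fB2 a a ω = 0 ∧ fC2 a' a' ω = 0)).card := by
  decide

theorem Hne2 : ∀ (a a' : Fin 2), a ≠ a' →
    (Finset.univ.filter (fun ω : Om4 => fB1 a ω = 0 ∧ fC1 ω.1 ω = 0)).card ≠
    (Finset.univ.filter (fun ω : Om4 => fB2 a a ω = 0 ∧ fC2 a' ω.1 ω = 0)).card := by
  decide

theorem Hne3 : ∀ (a a' : Fin 2), a ≠ a' →
    (Finset.univ.filter (fun ω : Om4 => fB1 ω.1 ω = 0 ∧ fC1 a ω = 0)).card ≠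
    (Finset.univ.filter (fun ω : Om4 => fB2 a ω.1 ω = 0 ∧ fC3 a a ω = 0)).card := by
  decide

/-- for the graph `A → B`, `A → C` with binary state spaces and `a ≠ a'`, the
joint responses to the edge intervention setting `(A→B)` to `a` and `(A→C)` to `a'`, to the
edge intervention setting only `(A→B)` to `a`, and to the edge intervention setting only
`(A→C)` to `a`, are all not identified from `p(A,B,C)` under the single world model. -/
theorem edge03_non_identification (a a' : Fin 2) (hne : a ≠ a') :
    NonIdWitness10 {((0 : Fin 3), (1 : Fin 3)), ((0 : Fin 3), (2 : Fin 3))}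
      (fun e _ => if e.2 = 1 then a else a') ∧
    NonIdWitness10 {((0 : Fin 3), (1 : Fin 3))} (fun _ _ => a) ∧
    NonIdWitness10 {((0 : Fin 3), (2 : Fin 3))} (fun _ _ => a) ∧
    ¬ Identified edge03_acyclic (fun C => SWM C)
      (respDist10 {((0 : Fin 3), (1 : Fin 3)), ((0 : Fin 3), (2 : Fin 3))}
        (fun e _ => if e.2 = 1 then a else a')) ∧
    ¬ Identified edge03_acyclic (fun C => SWM C)
      (respDist10 {((0 : Fin 3), (1 : Fin 3))} (fun _ _ => a)) ∧
    ¬ Identified edge03_acyclic (fun C => SWM C)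
      (respDist10 {((0 : Fin 3), (2 : Fin 3))} (fun _ _ => a)) := by
  -- witness 1
  have w1 : NonIdWitness10 {((0 : Fin 3), (1 : Fin 3)), ((0 : Fin 3), (2 : Fin 3))}
      (fun e _ => if e.2 = 1 then a else a') := by
    refine ⟨mkCS fB1 fC1, mkCS (fB2 a) (fC2 a'), SWM_mk _ _ H1, SWM_mk _ _ (H2 a a' hne), ?_, ?_⟩
    · funext s
      rw [obsDist_mk, obsDist_mk]
      congr 1
      exact_mod_cast Hobs12 a a' hne s
    · intro heq
      have h := congrFun heq (fun _ => (0 : Fin 2))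
      have mem1 : ((0 : Fin 3), (1 : Fin 3)) ∈
          ({((0 : Fin 3), (1 : Fin 3)), ((0 : Fin 3), (2 : Fin 3))} : Set (Fin 3 × Fin 3)) :=
        Set.mem_insert _ _
      have mem2 : ((0 : Fin 3), (2 : Fin 3)) ∈
          ({((0 : Fin 3), (1 : Fin 3)), ((0 : Fin 3), (2 : Fin 3))} : Set (Fin 3 × Fin 3)) :=
        Set.mem_insert_of_mem _ rfl
      have e1 := respDist_mk fB1 fC1 _ (fun e _ => if e.2 = 1 then a else a')
        (fun ω => fB1 a ω) (fun ω => fC1 a' ω)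
        (fun ω => edgeResp_mk1_mem fB1 fC1 _ (fun e _ => if e.2 = 1 then a else a') ω mem1)
        (fun ω => edgeResp_mk2_mem fB1 fC1 _ (fun e _ => if e.2 = 1 then a else a') ω mem2)
        (fun _ => (0 : Fin 2))
      have e2 := respDist_mk (fB2 a) (fC2 a') _ (fun e _ => if e.2 = 1 then a else a')
        (fun ω => fB2 a a ω) (fun ω => fC2 a' a' ω)
        (fun ω => edgeResp_mk1_mem (fB2 a) (fC2 a') _
          (fun e _ => if e.2 = 1 then a else a') ω mem1)
        (fun ω => edgeResp_mk2_mem (fB2 a) (fC2 a') _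
          (fun e _ => if e.2 = 1 then a else a') ω mem2)
        (fun _ => (0 : Fin 2))
      exact neq_of_card_ne (Hne1 a a' hne) ((e1.symm.trans h).trans e2)
  -- witness 2
  have w2 : NonIdWitness10 {((0 : Fin 3), (1 : Fin 3))} (fun _ _ => a) := by
    refine ⟨mkCS fB1 fC1, mkCS (fB2 a) (fC2 a'), SWM_mk _ _ H1, SWM_mk _ _ (H2 a a' hne), ?_, ?_⟩
    · funext s
      rw [obsDist_mk, obsDist_mk]
      congr 1
      exact_mod_cast Hobs12 a a' hne s
    · intro heq
      have h := congrFun heq (fun _ => (0 : Fin 2))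
      have mem1 : ((0 : Fin 3), (1 : Fin 3)) ∈
          ({((0 : Fin 3), (1 : Fin 3))} : Set (Fin 3 × Fin 3)) := rfl
      have nmem2 : ((0 : Fin 3), (2 : Fin 3)) ∉
          ({((0 : Fin 3), (1 : Fin 3))} : Set (Fin 3 × Fin 3)) := by simp
      have e1 := respDist_mk fB1 fC1 _ (fun _ _ => a)
        (fun ω => fB1 a ω) (fun ω => fC1 ω.1 ω)
        (fun ω => edgeResp_mk1_mem fB1 fC1 _ (fun _ _ => a) ω mem1)
        (fun ω => edgeResp_mk2_notMem fB1 fC1 _ (fun _ _ => a) ω nmem2)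
        (fun _ => (0 : Fin 2))
      have e2 := respDist_mk (fB2 a) (fC2 a') _ (fun _ _ => a)
        (fun ω => fB2 a a ω) (fun ω => fC2 a' ω.1 ω)
        (fun ω => edgeResp_mk1_mem (fB2 a) (fC2 a') _ (fun _ _ => a) ω mem1)
        (fun ω => edgeResp_mk2_notMem (fB2 a) (fC2 a') _ (fun _ _ => a) ω nmem2)
        (fun _ => (0 : Fin 2))
      exact neq_of_card_ne (Hne2 a a' hne) ((e1.symm.trans h).trans e2)
  -- witness 3
  have w3 : NonIdWitness10 {((0 : Fin 3), (2 : Fin 3))} (fun _ _ => a) := by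
    refine ⟨mkCS fB1 fC1, mkCS (fB2 a) (fC3 a), SWM_mk _ _ H1, SWM_mk _ _ (H3 a), ?_, ?_⟩
    · funext s
      rw [obsDist_mk, obsDist_mk]
      congr 1
      exact_mod_cast Hobs13 a a' hne s
    · intro heq
      have h := congrFun heq (fun _ => (0 : Fin 2))
      have nmem1 : ((0 : Fin 3), (1 : Fin 3)) ∉
          ({((0 : Fin 3), (2 : Fin 3))} : Set (Fin 3 × Fin 3)) := by simp
      have mem2 : ((0 : Fin 3), (2 : Fin 3)) ∈
          ({((0 : Fin 3), (2 : Fin 3))} : Set (Fin 3 × Fin 3)) := rfl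
      have e1 := respDist_mk fB1 fC1 _ (fun _ _ => a)
        (fun ω => fB1 ω.1 ω) (fun ω => fC1 a ω)
        (fun ω => edgeResp_mk1_notMem fB1 fC1 _ (fun _ _ => a) ω nmem1)
        (fun ω => edgeResp_mk2_mem fB1 fC1 _ (fun _ _ => a) ω mem2)
        (fun _ => (0 : Fin 2))
      have e2 := respDist_mk (fB2 a) (fC3 a) _ (fun _ _ => a)
        (fun ω => fB2 a ω.1 ω) (fun ω => fC3 a a ω)
        (fun ω => edgeResp_mk1_notMem (fB2 a) (fC3 a) _ (fun _ _ => a) ω nmem1)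
        (fun ω => edgeResp_mk2_mem (fB2 a) (fC3 a) _ (fun _ _ => a) ω mem2)
        (fun _ => (0 : Fin 2))
      exact neq_of_card_ne (Hne3 a a' hne) ((e1.symm.trans h).trans e2)
  refine ⟨w1, w2, w3, ?_, ?_, ?_⟩
  · intro hid
    obtain ⟨C₁, C₂, hs1, hs2, ho, hne'⟩ := w1
    exact hne' (hid C₁ C₂ hs1 hs2 ho)
  · intro hid
    obtain ⟨C₁, C₂, hs1, hs2, ho, hne'⟩ := w2
    exact hne' (hid C₁ C₂ hs1 hs2 ho)
  · intro hid
    obtain ⟨C₁, C₂, hs1, hs2, ho, hne'⟩ := w3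
    exact hne' (hid C₁ C₂ hs1 hs2 ho)

end CausalHierarchy
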